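/- For every integer n ≥ 1, the series ∑_{k≥0} 1 / [k² − (n−1/2)²]² equals π²/(4(n−1/2)²) + 1/(2(n−1/2)⁴). -/

import Mathlib

open Real Finset Filter

set_option maxHeartbeats 1000000

lemma hasSum_half_sq : HasSum (fun m : ℕ => 1 / ((m : ℝ) + 1/2) ^ 2) (π ^ 2 / 2) := by
  have h := hasSum_zeta_two
  have heven : HasSum (fun k : ℕ => (1:ℝ) / ((2*k : ℕ) : ℝ) ^ 2) (π ^ 2 / 24) := by
    have h4 := h.mul_left (1/4)
    have hfun : (fun k : ℕ => (1:ℝ) / ((2*k : ℕ) : ℝ) ^ 2)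
        = fun k : ℕ => (1/4) * (1 / (k:ℝ) ^ 2) := by
      funext k
      push_cast
      rcases eq_or_ne (k:ℝ) 0 with hk | hk
      · simp [hk]
      · field_simp; ring
    rw [hfun]
    convert h4 using 1
    rfl
    ring
  have hodds : Summable (fun k : ℕ => (1:ℝ) / ((2*k+1 : ℕ) : ℝ) ^ 2) := by
    have : Function.Injective (fun k : ℕ => 2*k+1) := fun a b hab => by dsimp only at hab; omega
    exact h.summable.comp_injective this
  have hodd := hodds.hasSum
  have htot : HasSum (fun k : ℕ => (1:ℝ) / (k : ℝ) ^ 2)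
      (π ^ 2 / 24 + ∑' k : ℕ, (1:ℝ) / ((2*k+1 : ℕ) : ℝ) ^ 2) :=
    heven.even_add_odd hodd
  have hval : ∑' k : ℕ, (1:ℝ) / ((2*k+1 : ℕ) : ℝ) ^ 2 = π ^ 2 / 8 := by
    have := h.unique htot
    linarith
  rw [hval] at hodd
  have h4 := hodd.mul_left 4
  have hfun : (fun m : ℕ => 1 / ((m : ℝ) + 1/2) ^ 2)
      = fun k : ℕ => 4 * ((1:ℝ) / ((2*k+1 : ℕ) : ℝ) ^ 2) := by
    funext k
    push_cast
    have : ((k:ℝ) + 1/2) ≠ 0 := by positivity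
    have h2 : (2*(k:ℝ) + 1) ≠ 0 := by positivity
    field_simp
    ring
  rw [hfun]
  convert h4 using 1
  rfl
  ring

theorem stmt1 (n : ℕ) (hn : 1 ≤ n) :
    ∑' k : ℕ, 1 / ((k : ℝ) ^ 2 - ((n : ℝ) - 1 / 2) ^ 2) ^ 2
      = π ^ 2 / (4 * ((n : ℝ) - 1 / 2) ^ 2) + 1 / (2 * ((n : ℝ) - 1 / 2) ^ 4) := by
  have hn1 : (1:ℝ) ≤ (n:ℝ) := by exact_mod_cast hn
  set a : ℝ := (n : ℝ) - 1/2 with ha_def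
  have ha0 : (0:ℝ) < a := by rw [ha_def]; linarith
  have hane : a ≠ 0 := ne_of_gt ha0
  clear_value a
  have hksub : ∀ k : ℕ, (k:ℝ) - a ≠ 0 := by
    intro k h
    rw [ha_def] at h
    have h2 : ((2*(n:ℤ) - 2*k : ℤ) : ℝ) = 1 := by push_cast; linarith
    have h3 : (2*(n:ℤ) - 2*k) = 1 := by exact_mod_cast h2
    omega
  have hkadd : ∀ k : ℕ, (0:ℝ) < (k:ℝ) + a := by
    intro k
    have : (0:ℝ) ≤ k := Nat.cast_nonneg k
    rw [ha_def]; linarith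
  -- the sum s over range (n-1)
  set s : ℝ := ∑ i ∈ range (n-1), 1 / ((i : ℝ) + 1/2) ^ 2 with hs_def
  -- A1
  have hA1 : HasSum (fun k : ℕ => 1 / ((k:ℝ) + a) ^ 2) (π ^ 2 / 2 - s) := by
    have h1 : HasSum (fun k : ℕ => 1 / (((k + (n-1) : ℕ)) + 1/2 : ℝ) ^ 2) (π ^ 2 / 2 - s) := by
      refine (hasSum_nat_add_iff (f := fun m : ℕ => 1 / ((m:ℝ) + 1/2) ^ 2) (n-1)).2 ?_
      rw [← hs_def, sub_add_cancel]
      exact hasSum_half_sq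
    convert h1 using 2 with k
    have : (((k + (n-1) : ℕ)) : ℝ) = (k:ℝ) + (n:ℝ) - 1 := by
      push_cast [Nat.cast_sub hn]; ring
    rw [this, ha_def]; ring_nf
  -- A2
  have hA2 : HasSum (fun k : ℕ => 1 / ((k:ℝ) - a) ^ 2)
      (π ^ 2 / 2 + ∑ i ∈ range n, 1 / ((i : ℝ) - a) ^ 2) := by
    refine (hasSum_nat_add_iff (f := fun k : ℕ => 1 / ((k:ℝ) - a) ^ 2) n).1 ?_
    have := hasSum_half_sq
    convert this using 2 with k
    rfl
    push_cast
    rw [ha_def]; ring_nf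
  -- value of the range-n sum
  have hrangen : ∑ i ∈ range n, 1 / ((i : ℝ) - a) ^ 2 = s + 1 / a ^ 2 := by
    have hrefl := Finset.sum_range_reflect (fun i => 1 / ((i : ℝ) - a) ^ 2) n
    have hterm : ∀ j ∈ range n, 1 / (((n - 1 - j : ℕ) : ℝ) - a) ^ 2 = 1 / ((j:ℝ) + 1/2) ^ 2 := by
      intro j hj
      rw [mem_range] at hj
      have hc : ((n - 1 - j : ℕ) : ℝ) = (n:ℝ) - 1 - j := by
        have : j ≤ n - 1 := by omega
        push_cast [Nat.cast_sub this, Nat.cast_sub hn]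
        ring
      rw [hc, ha_def]
      congr 1
      ring
    rw [Finset.sum_congr rfl hterm] at hrefl
    have hsplit : ∑ j ∈ range n, 1 / ((j:ℝ) + 1/2) ^ 2
        = s + 1 / (((n-1 : ℕ):ℝ) + 1/2) ^ 2 := by
      rw [hs_def]
      have : n = (n-1) + 1 := by omega
      rw [this, Finset.sum_range_succ]
      simp [← this]
    have hlast : (((n-1 : ℕ):ℝ) + 1/2) = a := by
      rw [Nat.cast_sub hn, ha_def]; push_cast; ring
    rw [hsplit, hlast] at hrefl
    linarith [hrefl]
  rw [hrangen] at hA2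
  -- B : telescoping sum
  set f : ℕ → ℝ := fun k => 1 / ((k:ℝ) - a) with hf_def
  set d : ℕ := 2*n - 1 with hd_def
  have hdcast : ((d:ℕ):ℝ) = 2*(n:ℝ) - 1 := by
    rw [hd_def]; push_cast [Nat.cast_sub (by omega : 1 ≤ 2*n)]; ring
  have hshift : ∀ k : ℕ, f (k + d) = 1 / ((k:ℝ) + a) := by
    intro k
    rw [hf_def]
    have : ((k + d : ℕ) : ℝ) = (k:ℝ) + (2*(n:ℝ) - 1) := by push_cast [hdcast]; ring
    simp only [this, ha_def]
    ring_nf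
  set b : ℕ → ℝ := fun k => 1 / ((k:ℝ) - a) - 1 / ((k:ℝ) + a) with hb_def
  -- partial sums of b
  have hpart : ∀ N : ℕ, ∑ k ∈ range N, b k = (∑ k ∈ range d, f k) - ∑ k ∈ range d, f (N + k) := by
    intro N
    have h1 : ∑ k ∈ range N, b k = ∑ k ∈ range N, (f k - f (k + d)) := by
      refine Finset.sum_congr rfl fun k _ => ?_
      rw [hb_def, hshift k, hf_def]
    rw [h1, Finset.sum_sub_distrib]
    have h2 : ∑ k ∈ range N, f (k + d) = ∑ i ∈ Finset.Ico d (N + d), f i := by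
      rw [Finset.sum_Ico_eq_sum_range]
      rw [Nat.add_sub_cancel]
      exact Finset.sum_congr rfl fun k _ => by rw [Nat.add_comm]
    have h3 : ∑ k ∈ range d, f (N + k) = ∑ i ∈ Finset.Ico N (N + d), f i := by
      rw [Finset.sum_Ico_eq_sum_range]
      rw [Nat.add_sub_cancel_left]
    rw [h2, h3]
    have e1 : ∑ i ∈ range N, f i + ∑ i ∈ Finset.Ico N (N + d), f i = ∑ i ∈ range (N + d), f i := by
      rw [Finset.range_eq_Ico, Finset.range_eq_Ico]
      exact Finset.sum_Ico_consecutive f (Nat.zero_le N) (Nat.le_add_right N d)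
    have e2 : ∑ i ∈ range d, f i + ∑ i ∈ Finset.Ico d (N + d), f i = ∑ i ∈ range (N + d), f i := by
      rw [Finset.range_eq_Ico, Finset.range_eq_Ico]
      exact Finset.sum_Ico_consecutive f (Nat.zero_le d) (by omega)
    linarith
  -- value of head sum
  have hC : ∑ k ∈ range d, f k = -(1/a) := by
    have hrefl := Finset.sum_range_reflect f d
    have hterm : ∀ j ∈ range d, f (d - 1 - j) = - f (j+1) := by
      intro j hj
      rw [mem_range] at hj
      have hc : ((d - 1 - j : ℕ) : ℝ) = 2*(n:ℝ) - 2 - j := by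
        have h1 : d - 1 - j = 2*n - (j+2) := by omega
        rw [h1, Nat.cast_sub (by omega)]
        push_cast; ring
      rw [hf_def]
      simp only [hc]
      push_cast
      rw [ha_def]
      have : (2*(n:ℝ) - 2 - j - ((n:ℝ) - 1/2)) = -((j:ℝ) + 1 - ((n:ℝ) - 1/2)) := by ring
      rw [this, div_neg]
    rw [Finset.sum_congr rfl hterm] at hrefl
    have htel : ∑ j ∈ range d, (f j - f (j+1)) = f 0 - f d := Finset.sum_range_sub' f d
    have hsum2 : (∑ k ∈ range d, f k) + (∑ k ∈ range d, f k) = f 0 - f d := by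
      rw [← htel, Finset.sum_sub_distrib]
      have : ∑ j ∈ range d, f (j+1) = - ∑ j ∈ range d, f j := by
        rw [← hrefl, ← Finset.sum_neg_distrib]
        exact Finset.sum_congr rfl fun j hj => (neg_neg _).symm
      rw [this]; ring
    have hf0 : f 0 = -(1/a) := by rw [hf_def]; simp [one_div, inv_neg]
    have hfd : f d = 1/a := by
      simp only [hf_def]
      rw [hdcast, ha_def]
      congr 1; ring
    rw [hf0, hfd] at hsum2
    linarith
  -- summability of b
  have hbsummable : Summable b := by
    rw [← summable_nat_add_iff n]
    have hle : ∀ k : ℕ, b (k + n) ≤ (2*(n:ℝ)) * (1 / ((k:ℝ) + 1/2) ^ 2) := by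
      intro k
      have hx : (0:ℝ) < (k:ℝ) + 1/2 := by positivity
      have hy : (0:ℝ) < ((k + n : ℕ):ℝ) + a := hkadd _
      have hxy : ((k + n : ℕ):ℝ) - a = (k:ℝ) + 1/2 := by push_cast [ha_def]; ring
      have hyv : ((k + n : ℕ):ℝ) + a = (k:ℝ) + 2*(n:ℝ) - 1/2 := by push_cast [ha_def]; ring
      have hk0 : (0:ℝ) ≤ (k:ℝ) := Nat.cast_nonneg k
      have hy' : (0:ℝ) < (k:ℝ) + 2*(n:ℝ) - 1/2 := by linarith
      rw [hb_def]
      simp only [hxy, hyv]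
      have key : 1 / ((k:ℝ) + 1/2) - 1 / ((k:ℝ) + 2*(n:ℝ) - 1/2)
          = (((k:ℝ) + 2*(n:ℝ) - 1/2) - ((k:ℝ) + 1/2))
            / (((k:ℝ) + 1/2) * ((k:ℝ) + 2*(n:ℝ) - 1/2)) := by
        rw [div_sub_div _ _ hx.ne' hy'.ne']
        congr 1
        ring
      rw [key]
      have h2 : (((k:ℝ) + 2*(n:ℝ) - 1/2) - ((k:ℝ) + 1/2))
            / (((k:ℝ) + 1/2) * ((k:ℝ) + 2*(n:ℝ) - 1/2))
          ≤ (2*(n:ℝ)) / (((k:ℝ) + 1/2) * ((k:ℝ) + 1/2)) := by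
        apply div_le_div₀ (by linarith) (by linarith) (by positivity)
        exact mul_le_mul_of_nonneg_left (by linarith) hx.le
      have h3 : (2*(n:ℝ)) / (((k:ℝ) + 1/2) * ((k:ℝ) + 1/2))
          = (2*(n:ℝ)) * (1 / ((k:ℝ) + 1/2) ^ 2) := by
        rw [sq, mul_one_div]
      linarith [h2, h3.symm.le]
    have hge : ∀ k : ℕ, 0 ≤ b (k + n) := by
      intro k
      have hx : (0:ℝ) < ((k + n : ℕ):ℝ) - a := by
        have : ((k + n : ℕ):ℝ) - a = (k:ℝ) + 1/2 := by push_cast [ha_def]; ring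
        rw [this]; positivity
      have hy : (0:ℝ) < ((k + n : ℕ):ℝ) + a := hkadd _
      rw [hb_def]
      simp only [sub_nonneg]
      exact one_div_le_one_div_of_le hx (by linarith)
    exact Summable.of_nonneg_of_le hge hle ((hasSum_half_sq.summable).mul_left _)
  -- limit of partial sums
  have hB : HasSum b (-(1/a)) := by
    have hten : Tendsto (fun N => ∑ k ∈ range N, b k) atTop (nhds (-(1/a))) := by
      have hfun : (fun N => ∑ k ∈ range N, b k)
          = fun N => (∑ k ∈ range d, f k) - ∑ k ∈ range d, f (N + k) := funext hpart
      rw [hfun, hC]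
      have htail : Tendsto (fun N => ∑ k ∈ range d, f (N + k)) atTop (nhds 0) := by
        have : Tendsto (fun N => ∑ k ∈ range d, f (N + k)) atTop
            (nhds (∑ k ∈ range d, (0:ℝ))) := by
          refine tendsto_finset_sum _ fun k _ => ?_
          have h1 : Tendsto (fun N : ℕ => ((N + k : ℕ):ℝ) - a) atTop atTop := by
            have := tendsto_natCast_atTop_atTop (R := ℝ)
            have h2 : Tendsto (fun N : ℕ => (N:ℝ) + ((k:ℝ) - a)) atTop atTop :=
              tendsto_atTop_add_const_right atTop _ this
            convert h2 using 2 with N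
            push_cast; ring
          have := h1.inv_tendsto_atTop
          simpa [hf_def, one_div, Function.comp, Pi.inv_def] using this
        simpa using this
      have := (tendsto_const_nhds (x := -(1/a)) (f := atTop (α := ℕ))).sub htail
      simpa using this.congr (fun N => by ring)
    have h1 := hbsummable.hasSum
    have h2 := h1.tendsto_sum_nat
    rwa [tendsto_nhds_unique h2 hten] at h1
  -- combine everything
  have hComb := ((hA1.add hA2).mul_left (1/(4*a^2))).sub (hB.mul_left (1/(4*a^3)))
  have hfun : (fun k : ℕ => 1/(4*a^2) * (1 / ((k:ℝ) + a) ^ 2 + 1 / ((k:ℝ) - a) ^ 2)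
        - 1/(4*a^3) * b k)
      = fun k : ℕ => 1 / ((k : ℝ) ^ 2 - a ^ 2) ^ 2 := by
    funext k
    have h1 := hksub k
    have h2 := ne_of_gt (hkadd k)
    rw [hb_def]
    have h3 : (k:ℝ) ^ 2 - a ^ 2 ≠ 0 := by
      have he : (k:ℝ) ^ 2 - a ^ 2 = ((k:ℝ) - a) * ((k:ℝ) + a) := by ring
      rw [he]
      exact mul_ne_zero h1 h2
    field_simp
    ring
  rw [hfun] at hComb
  rw [hComb.tsum_eq]
  field_simp
  ring
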